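/- Let d ∈ ℕ, let g : Fin d → (ℝ → ℝ) be a family of functions each of which is ContDiff ℝ n, let m : Fin d → ℕ be a multi-index with n = ∑ i, m i, define f : EuclideanSpace ℝ (Fin d) → ℝ by f x = ∏ i, g i (x i), and let a, b : Fin d → ℝ satisfy a i ≤ b i for all i. Let D^m f x denote iteratedFDeriv ℝ n f x evaluated on a tuple of standard basis vectors in which EuclideanSpace.single i 1 occurs exactly m i times. Then ∫_{x ∈ ∏ i, [a i, b i]} D^m f x dx = ∏ i, ∫_{s ∈ [a i, b i]} (iteratedDeriv (m i) (g i)) s ds. -/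

import Mathlib

open MeasureTheory Finset

private lemma tensor_contDiff {d : ℕ} (N : WithTop ℕ∞) (g : Fin d → ℝ → ℝ)
    (hg : ∀ i, ContDiff ℝ N (g i)) :
    ContDiff ℝ N (fun x : EuclideanSpace ℝ (Fin d) => ∏ i, g i (x i)) :=
  contDiff_prod fun i _ => (hg i).comp ((EuclideanSpace.proj i : EuclideanSpace ℝ (Fin d) →L[ℝ] ℝ).contDiff)

private lemma fderiv_tensor {d : ℕ} (g : Fin d → ℝ → ℝ)
    (hg : ∀ i, Differentiable ℝ (g i)) (j : Fin d) (x : EuclideanSpace ℝ (Fin d)) :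
    fderiv ℝ (fun x : EuclideanSpace ℝ (Fin d) => ∏ i, g i (x i)) x
      (EuclideanSpace.single j 1) =
    ∏ i, Function.update g j (deriv (g j)) i (x i) := by
  classical
  have hH : ∀ i : Fin d, HasFDerivAt (fun x : EuclideanSpace ℝ (Fin d) => g i (x i))
      ((deriv (g i) (x i)) • (EuclideanSpace.proj i : EuclideanSpace ℝ (Fin d) →L[ℝ] ℝ)) x := by
    intro i
    have h1 : HasDerivAt (g i) (deriv (g i) (x i)) (x i) := (hg i (x i)).hasDerivAt
    have h2 := (EuclideanSpace.proj i : EuclideanSpace ℝ (Fin d) →L[ℝ] ℝ).hasFDerivAt (x := x)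
    exact h1.comp_hasFDerivAt x h2
  have hprod : HasFDerivAt (fun x : EuclideanSpace ℝ (Fin d) => ∏ i, g i (x i))
      (∑ i, (∏ k ∈ Finset.univ.erase i, g k (x k)) •
        ((deriv (g i) (x i)) • (EuclideanSpace.proj i : EuclideanSpace ℝ (Fin d) →L[ℝ] ℝ))) x := by
    have h := HasFDerivAt.finset_prod (u := Finset.univ)
      (g := fun i (x : EuclideanSpace ℝ (Fin d)) => g i (x i)) (fun i _ => hH i)
    convert h using 1
  have hR : ∏ i, Function.update g j (deriv (g j)) i (x i)
      = deriv (g j) (x j) * ∏ k ∈ Finset.univ.erase j, g k (x k) := by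
    rw [← Finset.mul_prod_erase Finset.univ _ (Finset.mem_univ j), Function.update_self]
    congr 1
    exact Finset.prod_congr rfl fun k hk => by
      rw [Function.update_of_ne (Finset.ne_of_mem_erase hk)]
  rw [hprod.fderiv, ContinuousLinearMap.sum_apply,
    Finset.sum_eq_single j
      (fun i _ hij => by simp [EuclideanSpace.single_apply, hij]) (by simp), hR]
  simp [EuclideanSpace.single_apply, mul_comm]

private lemma count_succ {d n : ℕ} (idx : Fin (n + 1) → Fin d) (i : Fin d) :
    (Finset.univ.filter fun k => idx k = i).card =
      (Finset.univ.filter fun k : Fin n => idx k.castSucc = i).card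
        + (if idx (Fin.last n) = i then 1 else 0) := by
  classical
  simp only [Finset.card_filter]
  rw [Fin.sum_univ_castSucc]

private lemma key_pointwise {d : ℕ} : ∀ (n : ℕ) (g : Fin d → ℝ → ℝ),
    (∀ i, ContDiff ℝ n (g i)) → ∀ (idx : Fin n → Fin d) (x : EuclideanSpace ℝ (Fin d)),
    iteratedFDeriv ℝ n (fun x : EuclideanSpace ℝ (Fin d) => ∏ i, g i (x i)) x
        (fun k => EuclideanSpace.single (idx k) 1) =
      ∏ i, iteratedDeriv ((Finset.univ.filter fun k => idx k = i).card) (g i) (x i) := by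
  classical
  intro n
  induction n with
  | zero =>
    intro g hg idx x
    simp [iteratedFDeriv_zero_apply]
  | succ n ih =>
    intro g hg idx x
    set g' : Fin d → ℝ → ℝ := Function.update g (idx (Fin.last n))
      (deriv (g (idx (Fin.last n)))) with hg'def
    have hgdiff : ∀ i, Differentiable ℝ (g i) := fun i =>
      (hg i).differentiable (by simp)
    have hderiv_cd : ∀ i, ContDiff ℝ n (deriv (g i)) := by
      intro i
      have h := hg i
      rw [show ((n + 1 : ℕ) : WithTop ℕ∞) = (n : WithTop ℕ∞) + 1 by push_cast; ring,
        contDiff_succ_iff_deriv] at h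
      exact h.2.2
    have hg' : ∀ i, ContDiff ℝ n (g' i) := by
      intro i
      by_cases hij : i = idx (Fin.last n)
      · rw [hg'def, hij, Function.update_self]
        exact hderiv_cd _
      · rw [hg'def, Function.update_of_ne hij]
        exact (hg i).of_le (by exact_mod_cast Nat.le_succ n)
    have hF : ContDiff ℝ ((n + 1 : ℕ)) (fun x : EuclideanSpace ℝ (Fin d) => ∏ i, g i (x i)) :=
      tensor_contDiff _ g hg
    have hstep : iteratedFDeriv ℝ (n + 1)
        (fun x : EuclideanSpace ℝ (Fin d) => ∏ i, g i (x i)) x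
          (fun k => EuclideanSpace.single (idx k) 1)
        = iteratedFDeriv ℝ n (fun y => fderiv ℝ
            (fun x : EuclideanSpace ℝ (Fin d) => ∏ i, g i (x i)) y
            (EuclideanSpace.single (idx (Fin.last n)) 1)) x
          (fun k : Fin n => EuclideanSpace.single (idx k.castSucc) 1) := by
      rw [iteratedFDeriv_succ_apply_right]
      have hfd : ContDiff ℝ n (fderiv ℝ (fun x : EuclideanSpace ℝ (Fin d) => ∏ i, g i (x i))) :=
        hF.fderiv_right (by exact_mod_cast le_refl _)
      set A : (EuclideanSpace ℝ (Fin d) →L[ℝ] ℝ) →L[ℝ] ℝ :=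
        ContinuousLinearMap.apply ℝ ℝ (EuclideanSpace.single (idx (Fin.last n)) 1) with hA
      have hcomp := A.iteratedFDeriv_comp_left
        (f := fderiv ℝ (fun x : EuclideanSpace ℝ (Fin d) => ∏ i, g i (x i))) (x := x) hfd.contDiffAt
        (le_refl (n : WithTop ℕ∞))
      have h2 : (fun y => fderiv ℝ (fun x : EuclideanSpace ℝ (Fin d) => ∏ i, g i (x i)) y
          (EuclideanSpace.single (idx (Fin.last n)) 1))
          = ⇑A ∘ fderiv ℝ (fun x : EuclideanSpace ℝ (Fin d) => ∏ i, g i (x i)) := rfl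
      rw [h2, hcomp]
      rfl
    rw [hstep]
    have hrw : (fun y => fderiv ℝ (fun x : EuclideanSpace ℝ (Fin d) => ∏ i, g i (x i)) y
        (EuclideanSpace.single (idx (Fin.last n)) 1))
        = fun y : EuclideanSpace ℝ (Fin d) => ∏ i, g' i (y i) := by
      funext y
      exact fderiv_tensor g hgdiff (idx (Fin.last n)) y
    rw [hrw, ih g' hg' (fun k => idx k.castSucc) x]
    apply Finset.prod_congr rfl
    intro i _
    rw [count_succ idx i]
    by_cases hij : idx (Fin.last n) = i
    · rw [hg'def, ← hij, Function.update_self, if_pos rfl, ← iteratedDeriv_succ']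
    · rw [hg'def, Function.update_of_ne (fun h => hij h.symm), if_neg hij, Nat.add_zero]

theorem box_integral_mixedPartial_tensorProduct (d n : ℕ) (g : Fin d → ℝ → ℝ)
    (hg : ∀ i, ContDiff ℝ n (g i)) (m : Fin d → ℕ) (hn : n = ∑ i, m i)
    (idx : Fin n → Fin d)
    (hidx : ∀ i, (Finset.univ.filter fun k => idx k = i).card = m i)
    (a b : Fin d → ℝ) (hab : ∀ i, a i ≤ b i) :
    ∫ x in (WithLp.ofLp ⁻¹' (Set.univ.pi fun i => Set.Icc (a i) (b i)) : Set (EuclideanSpace ℝ (Fin d))),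
      iteratedFDeriv ℝ n (fun x : EuclideanSpace ℝ (Fin d) => ∏ i, g i (x i)) x
        (fun k => EuclideanSpace.single (idx k) 1) =
      ∏ i, ∫ s in Set.Icc (a i) (b i), iteratedDeriv (m i) (g i) s := by
  classical
  have hpt : ∀ x : EuclideanSpace ℝ (Fin d),
      iteratedFDeriv ℝ n (fun x : EuclideanSpace ℝ (Fin d) => ∏ i, g i (x i)) x
        (fun k => EuclideanSpace.single (idx k) 1) = ∏ i, iteratedDeriv (m i) (g i) (x i) := by
    intro x
    rw [key_pointwise n g hg idx x]
    exact Finset.prod_congr rfl fun i _ => by rw [hidx i]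
  simp_rw [hpt]
  refine ((EuclideanSpace.volume_preserving_symm_measurableEquiv_toLp (Fin d)).setIntegral_preimage_emb
    (MeasurableEquiv.toLp 2 (Fin d → ℝ)).symm.measurableEmbedding
    (fun y : Fin d → ℝ => ∏ i, iteratedDeriv (m i) (g i) (y i)) _).trans ?_
  show (∫ x in (Set.univ.pi fun i => Set.Icc (a i) (b i) : Set (Fin d → ℝ)),
      ∏ i, iteratedDeriv (m i) (g i) (x i)) = _
  have hmeas : MeasurableSet (Set.univ.pi fun i => Set.Icc (a i) (b i) : Set (Fin d → ℝ)) :=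
    MeasurableSet.univ_pi fun i => measurableSet_Icc
  rw [← integral_indicator hmeas]
  have hind : ∀ y : Fin d → ℝ,
      (Set.univ.pi fun i => Set.Icc (a i) (b i)).indicator
        (fun y : Fin d → ℝ => ∏ i, iteratedDeriv (m i) (g i) (y i)) y
      = ∏ i, (Set.Icc (a i) (b i)).indicator (fun s => iteratedDeriv (m i) (g i) s) (y i) := by
    intro y
    by_cases hy : y ∈ (Set.univ.pi fun i => Set.Icc (a i) (b i) : Set (Fin d → ℝ))
    · rw [Set.indicator_of_mem hy]
      exact Finset.prod_congr rfl fun i _ =>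
        (Set.indicator_of_mem (hy i (Set.mem_univ i)) _).symm
    · rw [Set.indicator_of_notMem hy]
      obtain ⟨i, hi⟩ : ∃ i, y i ∉ Set.Icc (a i) (b i) := by
        by_contra hc
        push_neg at hc
        exact hy fun i _ => hc i
      exact (Finset.prod_eq_zero (Finset.mem_univ i)
        (Set.indicator_of_notMem hi _)).symm
  rw [integral_congr_ae (Filter.Eventually.of_forall hind)]
  rw [volume_pi]
  rw [MeasureTheory.integral_fintype_prod_eq_prod (ι := Fin d)
    (fun i => (Set.Icc (a i) (b i)).indicator (fun s => iteratedDeriv (m i) (g i) s))]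
  exact Finset.prod_congr rfl fun i _ => integral_indicator measurableSet_Icc
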